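/- Suppose B√G + 𝔉 U = 0 where 𝔉 = √(1 + G B²/b²), 0 < G, b > 0, and |U| < b. Then 𝔉·√(1 - U²/b²) = 1, and consequently B = -U/(√G · √(1 - U²/b²)). -/
import Mathlib


open Real

/-- the first BPS equation `B√G + 𝔉U = 0` with
`𝔉 = √(1 + GB²/b²)` forces `𝔉·√(1 - U²/b²) = 1` and yields the explicit
solution `B = -U/(√G·√(1 - U²/b²))` for the magnetic field. -/
theorem stmt16 (b G B U : ℝ) (hb : 0 < b) (hG : 0 < G) (hU : |U| < b)
    (hbps : B * Real.sqrt G + Real.sqrt (1 + G * B^2 / b^2) * U = 0) :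
    Real.sqrt (1 + G * B^2 / b^2) * Real.sqrt (1 - U^2 / b^2) = 1
    ∧ B = -U / (Real.sqrt G * Real.sqrt (1 - U^2 / b^2)) := by
  have hb2 : (0:ℝ) < b^2 := by positivity
  have hUb : U^2 < b^2 := by nlinarith [abs_nonneg U, sq_abs U]
  have h1 : (0:ℝ) < 1 - U^2 / b^2 := by
    rw [sub_pos, div_lt_one hb2]; exact hUb
  have h2 : (0:ℝ) ≤ 1 + G * B^2 / b^2 := by positivity
  -- square the BPS equation
  have hsq : (1 + G * B^2 / b^2) * U^2 = B^2 * G := by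
    have h3 : Real.sqrt (1 + G * B^2 / b^2) * U = -(B * Real.sqrt G) := by linarith
    have h4 : (Real.sqrt (1 + G * B^2 / b^2) * U)^2 = (B * Real.sqrt G)^2 := by
      rw [h3]; ring
    rw [mul_pow, mul_pow, Real.sq_sqrt h2, Real.sq_sqrt hG.le] at h4
    linarith
  have key : (1 + G * B^2 / b^2) * (1 - U^2 / b^2) = 1 := by
    field_simp at hsq ⊢
    nlinarith [hsq]
  have first : Real.sqrt (1 + G * B^2 / b^2) * Real.sqrt (1 - U^2 / b^2) = 1 := by
    rw [← Real.sqrt_mul h2, key, Real.sqrt_one]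
  refine ⟨first, ?_⟩
  have hsG : (0:ℝ) < Real.sqrt G := Real.sqrt_pos.mpr hG
  have hs1 : (0:ℝ) < Real.sqrt (1 - U^2 / b^2) := Real.sqrt_pos.mpr h1
  rw [eq_div_iff (by positivity)]
  have : B * Real.sqrt G * Real.sqrt (1 - U^2 / b^2)
      = -(Real.sqrt (1 + G * B^2 / b^2) * U) * Real.sqrt (1 - U^2 / b^2) := by
    have : B * Real.sqrt G = -(Real.sqrt (1 + G * B^2 / b^2) * U) := by linarith
    rw [this]
  calc B * (Real.sqrt G * Real.sqrt (1 - U^2 / b^2))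
      = B * Real.sqrt G * Real.sqrt (1 - U^2 / b^2) := by ring
    _ = -(Real.sqrt (1 + G * B^2 / b^2) * U) * Real.sqrt (1 - U^2 / b^2) := this
    _ = -U * (Real.sqrt (1 + G * B^2 / b^2) * Real.sqrt (1 - U^2 / b^2)) := by ring
    _ = -U := by rw [first, mul_one]
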